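/- Let k ≥ 1 be an integer, let a < b be real numbers, and let e be a real polynomial of degree at most k. Then ∫_a^b e′(t) · (Π e)(t) dt = (e(b)² − e(a)²)/2, where e′ is the derivative of e. (Key energy identity used in the proof of Lemma 5.5: testing the time derivative with the L² projection of e onto polynomials of one degree less produces exact endpoint energy differences.) -/

import Mathlib

/-- Key energy identity: testing the time derivative of a polynomial `e` of degree at
most `k` with the `L²(a,b)`-projection of `e` onto polynomials of degree at most `k-1`
produces the exact endpoint energy difference. -/
theorem energy_identity_projection_test (k : ℕ) (hk : 1 ≤ k) (a b : ℝ) (hab : a < b)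
    (e : Polynomial ℝ) (he : e.natDegree ≤ k)
    (Pe : Polynomial ℝ) (hPedeg : Pe.natDegree < k)
    (hproj : ∀ φ : Polynomial ℝ, φ.natDegree < k →
      ∫ s in a..b, (e.eval s - Pe.eval s) * φ.eval s = 0) :
    ∫ s in a..b, (Polynomial.derivative e).eval s * Pe.eval s =
      ((e.eval b) ^ 2 - (e.eval a) ^ 2) / 2 := by
  have hd : (Polynomial.derivative e).natDegree < k := by
    calc (Polynomial.derivative e).natDegree ≤ e.natDegree - 1 :=
          Polynomial.natDegree_derivative_le e
      _ ≤ k - 1 := Nat.sub_le_sub_right he 1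
      _ < k := Nat.sub_lt hk one_pos
  have h1 := hproj _ hd
  -- ∫ (e - Pe) * e' = 0, so ∫ e' * Pe = ∫ e' * e
  have h2 : ∫ s in a..b, (Polynomial.derivative e).eval s * Pe.eval s
      = ∫ s in a..b, e.eval s * (Polynomial.derivative e).eval s := by
    have := intervalIntegral.integral_sub
      (μ := MeasureTheory.volume)
      ((e.continuous.mul (Polynomial.derivative e).continuous).intervalIntegrable a b)
      ((Pe.continuous.mul (Polynomial.derivative e).continuous).intervalIntegrable a b)
    simp only [sub_mul] at h1
    simp only [Pi.mul_apply] at this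
    rw [this] at h1
    have h3 : ∫ s in a..b, Pe.eval s * (Polynomial.derivative e).eval s
        = ∫ s in a..b, e.eval s * (Polynomial.derivative e).eval s := by linarith
    rw [← h3]
    congr 1; ext s; ring
  rw [h2]
  have h4 : ∫ s in a..b, e.eval s * (Polynomial.derivative e).eval s
      = ((e.eval b) ^ 2 - (e.eval a) ^ 2) / 2 := by
    have : ∀ x : ℝ, HasDerivAt (fun s => (e.eval s) ^ 2 / 2)
        (e.eval x * (Polynomial.derivative e).eval x) x := by
      intro x
      have h := (e.hasDerivAt x).pow 2
      have := h.div_const 2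
      convert this using 1
      push_cast
      · rfl
      · rfl
      · rfl
      · push_cast; ring
    rw [intervalIntegral.integral_eq_sub_of_hasDerivAt (fun x _ => this x)
      ((e.continuous.mul (Polynomial.derivative e).continuous).intervalIntegrable a b)]
    ring
  exact h4
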